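/- For n ≥ 3, t ≥ 2, 0 ≤ ℓ ≤ k − t: if 𝓐 and 𝓑 are cross t-intersecting families in 2^[n] and, for some 1 ≤ i < j ≤ n, s_{ij}(𝓐) = s_{ij}(𝓑) = 𝓕_ℓ^t(n), then 𝓐 = 𝓑 and 𝓐 is isomorphic to 𝓕_ℓ^t(n) (i.e., equal to it up to a permutation of [n]). -/

import Mathlib

open Finset

/-- The `(i,j)`-shift of a single set relative to a family. -/
def shiftSet (𝓖 : Finset (Finset ℕ)) (i j : ℕ) (G : Finset ℕ) : Finset ℕ :=
  if j ∈ G ∧ i ∉ G ∧ insert i (G.erase j) ∉ 𝓖 then insert i (G.erase j) else G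

/-- The `(i,j)`-shift of a family. -/
def shiftFam (i j : ℕ) (𝓖 : Finset (Finset ℕ)) : Finset (Finset ℕ) :=
  𝓖.image (shiftSet 𝓖 i j)

/-- The non-uniform Frankl family `𝓕_ℓ^t(n) = {F ⊆ [n] : |F ∩ [t+2ℓ]| ≥ t+ℓ}`. -/
def franklFam (n t ℓ : ℕ) : Finset (Finset ℕ) :=
  ((Finset.Icc 1 n).powerset).filter
    (fun F => t + ℓ ≤ (F ∩ Finset.Icc 1 (t + 2 * ℓ)).card)

/-- Two families of subsets of `[n]` are isomorphic if one is the image of the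
other under a permutation of `[n]`. -/
def FamIso (n : ℕ) (𝓐 𝓑 : Finset (Finset ℕ)) : Prop :=
  ∃ σ : Equiv.Perm ℕ, (∀ x ∈ Finset.Icc 1 n, σ x ∈ Finset.Icc 1 n) ∧
    𝓐 = 𝓑.image (fun B => B.image σ)

/-- the swapped Frankl family -/
def swapFam (n t ℓ i j : ℕ) : Finset (Finset ℕ) :=
  ((Finset.Icc 1 n).powerset).filter
    (fun F => t + ℓ ≤ (F ∩ (insert j ((Finset.Icc 1 (t + 2 * ℓ)).erase i))).card)

lemma mem_frankl {n t ℓ : ℕ} {F : Finset ℕ} :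
    F ∈ franklFam n t ℓ ↔ F ⊆ Finset.Icc 1 n ∧ t + ℓ ≤ (F ∩ Finset.Icc 1 (t + 2 * ℓ)).card := by
  simp [franklFam]

lemma mem_swapFam {n t ℓ i j : ℕ} {F : Finset ℕ} :
    F ∈ swapFam n t ℓ i j ↔ F ⊆ Finset.Icc 1 n ∧
      t + ℓ ≤ (F ∩ (insert j ((Finset.Icc 1 (t + 2 * ℓ)).erase i))).card := by
  simp [swapFam]

section facts
variable {i j : ℕ} {𝓐 𝓕x : Finset (Finset ℕ)}

lemma fact1 (hij : i ≠ j) (hsh : shiftFam i j 𝓐 = 𝓕x) {F : Finset ℕ} (hF : F ∈ 𝓕x) :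
    F ∈ 𝓐 ∨ (i ∈ F ∧ j ∉ F ∧ F ∉ 𝓐 ∧ insert j (F.erase i) ∈ 𝓐) := by
  rw [← hsh, shiftFam, mem_image] at hF
  obtain ⟨G, hG, hGF⟩ := hF
  unfold shiftSet at hGF
  split_ifs at hGF with hc
  · subst hGF
    refine Or.inr ⟨mem_insert_self _ _, ?_, hc.2.2, ?_⟩
    · intro hmem
      rcases mem_insert.1 hmem with h | h
      · exact hij h.symm
      · exact notMem_erase _ _ h
    · rw [erase_insert (fun h => hc.2.1 (mem_of_mem_erase h)), insert_erase hc.1]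
      exact hG
  · subst hGF; exact Or.inl hG

lemma fact2 (hsh : shiftFam i j 𝓐 = 𝓕x) {G : Finset ℕ} (hG : G ∈ 𝓐) :
    G ∈ 𝓕x ∨ (j ∈ G ∧ i ∉ G ∧ insert i (G.erase j) ∈ 𝓕x ∧ insert i (G.erase j) ∉ 𝓐) := by
  have h : shiftSet 𝓐 i j G ∈ 𝓕x := by
    rw [← hsh, shiftFam]; exact mem_image_of_mem _ hG
  unfold shiftSet at h
  split_ifs at h with hc
  · exact Or.inr ⟨hc.1, hc.2.1, h, hc.2.2⟩
  · exact Or.inl h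

lemma fact1' (hij : i ≠ j) (hsh : shiftFam i j 𝓐 = 𝓕x) {F : Finset ℕ} (hF : F ∈ 𝓕x)
    (hnc : i ∈ F → j ∉ F → insert j (F.erase i) ∈ 𝓕x) : F ∈ 𝓐 := by
  rcases fact1 hij hsh hF with h | ⟨hiF, hjF, hFA, hGA⟩
  · exact h
  exfalso
  have hG : insert j (F.erase i) ∈ 𝓕x := hnc hiF hjF
  rw [← hsh, shiftFam, mem_image] at hG
  obtain ⟨H, hH, hHG⟩ := hG
  unfold shiftSet at hHG
  split_ifs at hHG with hc
  · have h1 : i ∈ insert j (F.erase i) := hHG ▸ mem_insert_self i _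
    rcases mem_insert.1 h1 with h | h
    · exact hij h
    · exact notMem_erase _ _ h
  · subst hHG
    refine hc ⟨mem_insert_self _ _, ?_, ?_⟩
    · intro hmem
      rcases mem_insert.1 hmem with h | h
      · exact hij h
      · exact notMem_erase _ _ h
    · rw [erase_insert (fun h => hjF (mem_of_mem_erase h)), insert_erase hiF]
      exact hFA

lemma famEqF (hij : i ≠ j) (hsh : shiftFam i j 𝓐 = 𝓕x) (hsub : ∀ A ∈ 𝓐, A ∈ 𝓕x) :
    𝓐 = 𝓕x := by
  refine Finset.Subset.antisymm (fun A hA => hsub A hA) (fun F hF => ?_)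
  by_cases hc : i ∈ F ∧ j ∉ F ∧ insert j (F.erase i) ∉ 𝓕x
  · rcases fact1 hij hsh hF with h | ⟨_, _, _, hGA⟩
    · exact h
    · exact absurd (hsub _ hGA) hc.2.2
  · refine fact1' hij hsh hF (fun h1 h2 => ?_)
    by_contra h3
    exact hc ⟨h1, h2, h3⟩

end facts

lemma card_inter_insert {x : ℕ} {W : Finset ℕ} (hx : x ∉ W) (S : Finset ℕ) :
    (S ∩ insert x W).card = (S ∩ W).card + (if x ∈ S then 1 else 0) := by
  by_cases hxS : x ∈ S
  · rw [if_pos hxS]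
    have h : S ∩ insert x W = insert x (S ∩ W) := by
      ext a; simp only [mem_inter, mem_insert]
      constructor
      · rintro ⟨ha, h | h⟩
        · exact Or.inl h
        · exact Or.inr ⟨ha, h⟩
      · rintro (h | ⟨ha, h⟩)
        · exact ⟨h ▸ hxS, Or.inl h⟩
        · exact ⟨ha, Or.inr h⟩
    rw [h, card_insert_of_notMem (fun h' => hx (mem_inter.1 h').2)]
  · rw [if_neg hxS]
    congr 1
    ext a; simp only [mem_inter, mem_insert]
    constructor
    · rintro ⟨ha, h | h⟩
      · exact absurd (h ▸ ha) hxS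
      · exact ⟨ha, h⟩
    · exact fun ⟨ha, h⟩ => ⟨ha, Or.inr h⟩

/-- The middle-set lemma: for any two (t+ℓ-1)-subsets X, X' of W with
`|X \ X'| ≤ 1`, there is a (t+ℓ-1)-subset Z of W meeting both in ≤ t-1 points. -/
lemma mid {t ℓ : ℕ} (ht : 2 ≤ t) {W X X' : Finset ℕ}
    (hW : W.card + 1 = t + 2 * ℓ)
    (hX : X ⊆ W) (hX' : X' ⊆ W) (hcX : X.card + 1 = t + ℓ) (hcX' : X'.card + 1 = t + ℓ)
    (hd : (X \ X').card ≤ 1) :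
    ∃ Z, Z ⊆ W ∧ Z.card + 1 = t + ℓ ∧ (X ∩ Z).card + 1 ≤ t ∧ (X' ∩ Z).card + 1 ≤ t := by
  set ε := (X \ X').card with hε
  have hXi : (X ∩ X').card + ε = X.card := by
    rw [hε]; exact card_inter_add_card_sdiff X X'
  have hX'i : (X' ∩ X).card + (X' \ X).card = X'.card := card_inter_add_card_sdiff X' X
  have hIcomm : (X' ∩ X).card = (X ∩ X').card := by rw [inter_comm]
  have hεle : t - 1 - ε ≤ (X ∩ X').card := by omega
  obtain ⟨S, hS, hScard⟩ := Finset.exists_subset_card_eq hεle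
  have hsub : X ∩ X' ⊆ W := fun a ha => hX (mem_inter.1 ha).1
  have hWd : (W \ (X ∩ X')).card = W.card - (X ∩ X').card := card_sdiff_of_subset hsub
  refine ⟨(W \ (X ∩ X')) ∪ S, ?_, ?_, ?_, ?_⟩
  · intro a ha
    rcases mem_union.1 ha with h | h
    · exact (mem_sdiff.1 h).1
    · exact hsub (hS h)
  · have hdisj : Disjoint (W \ (X ∩ X')) S :=
      Finset.sdiff_disjoint.mono_right hS
    rw [card_union_of_disjoint hdisj, hWd, hScard]
    omega
  · have h1 : X ∩ ((W \ (X ∩ X')) ∪ S) = (X \ X') ∪ S := by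
      ext a
      simp only [mem_inter, mem_union, mem_sdiff]
      constructor
      · rintro ⟨haX, h | h⟩
        · exact Or.inl ⟨haX, fun h' => h.2 ⟨haX, h'⟩⟩
        · exact Or.inr h
      · rintro (⟨haX, h⟩ | h)
        · exact ⟨haX, Or.inl ⟨hX haX, fun h' => h h'.2⟩⟩
        · have := mem_inter.1 (hS h)
          exact ⟨this.1, Or.inr h⟩
    have hdisj : Disjoint (X \ X') S := Finset.sdiff_disjoint.mono_right
      (fun a ha => (mem_inter.1 (hS ha)).2)
    rw [h1, card_union_of_disjoint hdisj, hScard]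
    omega
  · have h1 : X' ∩ ((W \ (X ∩ X')) ∪ S) = (X' \ X) ∪ S := by
      ext a
      simp only [mem_inter, mem_union, mem_sdiff]
      constructor
      · rintro ⟨haX, h | h⟩
        · exact Or.inl ⟨haX, fun h' => h.2 ⟨h', haX⟩⟩
        · exact Or.inr h
      · rintro (⟨haX, h⟩ | h)
        · exact ⟨haX, Or.inl ⟨hX' haX, fun h' => h h'.1⟩⟩
        · have := mem_inter.1 (hS h)
          exact ⟨this.2, Or.inr h⟩
    have hdisj : Disjoint (X' \ X) S := Finset.sdiff_disjoint.mono_right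
      (fun a ha => (mem_inter.1 (hS ha)).1)
    rw [h1, card_union_of_disjoint hdisj, hScard]
    omega

/-- Structure of a member of `𝓖` that is not in the Frankl family. -/
lemma structNot {n t ℓ i j : ℕ} {𝓖 : Finset (Finset ℕ)}
    (hi : 1 ≤ i) (hij : i < j) (hjn : j ≤ n)
    (hsh : shiftFam i j 𝓖 = franklFam n t ℓ)
    {A : Finset ℕ} (hA : A ∈ 𝓖) (hnF : A ∉ franklFam n t ℓ) :
    i ≤ t + 2 * ℓ ∧ t + 2 * ℓ < j ∧ j ∈ A ∧ i ∉ A ∧ A ⊆ Finset.Icc 1 n ∧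
      (A ∩ Finset.Icc 1 (t + 2 * ℓ)).card + 1 = t + ℓ := by
  set M := Finset.Icc 1 (t + 2 * ℓ) with hM
  rcases fact2 hsh hA with h | ⟨hjA, hiA, hF, _⟩
  · exact absurd h hnF
  rw [mem_frankl] at hF
  obtain ⟨hFN, hFc⟩ := hF
  have hj1 : 1 ≤ j := le_trans hi (le_of_lt hij)
  have hAN : A ⊆ Finset.Icc 1 n := by
    intro a ha
    by_cases haj : a = j
    · exact mem_Icc.2 ⟨haj ▸ hj1, haj ▸ hjn⟩
    · exact hFN (mem_insert_of_mem (mem_erase.2 ⟨haj, ha⟩))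
  have hAc : ¬ (t + ℓ ≤ (A ∩ M).card) := fun h => hnF (mem_frankl.2 ⟨hAN, h⟩)
  have h1 : (A.erase j) ∩ M = (A ∩ M).erase j := erase_inter j A M
  by_cases him : i ∈ M
  · have hFM : insert i (A.erase j) ∩ M = insert i ((A ∩ M).erase j) := by
      rw [insert_inter_of_mem him, h1]
    by_cases hjm : j ∈ M
    · exfalso
      have hjAM : j ∈ A ∩ M := mem_inter.2 ⟨hjA, hjm⟩
      have h2 : ((A ∩ M).erase j).card = (A ∩ M).card - 1 := card_erase_of_mem hjAM
      have h3 : 1 ≤ (A ∩ M).card := card_pos.2 ⟨j, hjAM⟩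
      have h4 := card_insert_le i ((A ∩ M).erase j)
      rw [hFM] at hFc
      omega
    · have h2 : (A ∩ M).erase j = A ∩ M :=
        erase_eq_of_notMem (fun h => hjm (mem_inter.1 h).2)
      have h4 := card_insert_le i ((A ∩ M).erase j)
      rw [hFM] at hFc
      rw [h2] at hFc h4
      have him' := mem_Icc.1 him
      have hjm' : ¬ (1 ≤ j ∧ j ≤ t + 2 * ℓ) := fun h => hjm (mem_Icc.2 h)
      exact ⟨him'.2, by omega, hjA, hiA, hAN, by omega⟩
  · exfalso
    have hFM : insert i (A.erase j) ∩ M = (A ∩ M).erase j := by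
      rw [insert_inter_of_notMem him, h1]
    rw [hFM] at hFc
    have h4 := card_le_card (erase_subset j (A ∩ M))
    omega

/-- Key step: a set `A ∈ 𝓐` avoiding `i` and meeting a small `Y ⊆ W` in fewer
than `t` points forces `insert j Y ∈ 𝓑`. -/
lemma keyStep {n t ℓ i j : ℕ} {𝓐 𝓑 : Finset (Finset ℕ)}
    (hi : 1 ≤ i) (hij : i < j) (hjn : j ≤ n) (him : i ≤ t + 2 * ℓ)
    (hjm : t + 2 * ℓ < j)
    (hcross : ∀ A ∈ 𝓐, ∀ B ∈ 𝓑, t ≤ (A ∩ B).card)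
    (hshB : shiftFam i j 𝓑 = franklFam n t ℓ)
    {A : Finset ℕ} (hA : A ∈ 𝓐) (hiA : i ∉ A)
    {Y : Finset ℕ} (hY : Y ⊆ (Finset.Icc 1 (t + 2 * ℓ)).erase i)
    (hYc : Y.card + 1 = t + ℓ) (hAY : (A ∩ Y).card + 1 ≤ t) :
    insert j Y ∈ 𝓑 := by
  have hiY : i ∉ Y := fun h => (mem_erase.1 (hY h)).1 rfl
  have hYM : Y ⊆ Finset.Icc 1 (t + 2 * ℓ) := hY.trans (erase_subset _ _)
  have hMN : Finset.Icc 1 (t + 2 * ℓ) ⊆ Finset.Icc 1 n := by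
    apply Finset.Icc_subset_Icc le_rfl
    omega
  have hFN : insert i Y ⊆ Finset.Icc 1 n := by
    intro a ha
    rcases mem_insert.1 ha with h | h
    · exact mem_Icc.2 ⟨h ▸ hi, h ▸ (by omega)⟩
    · exact hMN (hYM h)
  have hFsub : insert i Y ⊆ Finset.Icc 1 (t + 2 * ℓ) :=
    insert_subset (mem_Icc.2 ⟨hi, him⟩) hYM
  have hFM : insert i Y ∩ Finset.Icc 1 (t + 2 * ℓ) = insert i Y := inter_eq_left.2 hFsub
  have hFcard : (insert i Y).card = t + ℓ := by
    rw [card_insert_of_notMem hiY]; omega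
  have hFfr : insert i Y ∈ franklFam n t ℓ := mem_frankl.2 ⟨hFN, by rw [hFM, hFcard]⟩
  have hFB : insert i Y ∉ 𝓑 := by
    intro h
    have hc := hcross A hA _ h
    have e1 : (A ∩ insert i Y).card = (A ∩ Y).card := by
      rw [inter_comm, insert_inter_of_notMem hiA, inter_comm]
    omega
  rcases fact1 (Nat.ne_of_lt hij) hshB hFfr with h | ⟨_, _, _, hmem⟩
  · exact absurd h hFB
  · rwa [erase_insert hiY] at hmem

/-- If `𝓖` shifts to the Frankl family and contains no "critical" set, then
`𝓖` equals the swapped Frankl family. -/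
lemma famEq {n t ℓ i j : ℕ} {𝓖 : Finset (Finset ℕ)}
    (ht : 2 ≤ t) (hi : 1 ≤ i) (hij : i < j) (hjn : j ≤ n)
    (him : i ≤ t + 2 * ℓ) (hjm : t + 2 * ℓ < j)
    (hsh : shiftFam i j 𝓖 = franklFam n t ℓ)
    (hnocrit : ∀ F : Finset ℕ, i ∈ F → j ∉ F →
      (F ∩ Finset.Icc 1 (t + 2 * ℓ)).card = t + ℓ → F ∉ 𝓖) :
    𝓖 = swapFam n t ℓ i j := by
  have hijne : i ≠ j := Nat.ne_of_lt hij
  have hiM : i ∈ Finset.Icc 1 (t + 2 * ℓ) := mem_Icc.2 ⟨hi, him⟩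
  have hiW : i ∉ (Finset.Icc 1 (t + 2 * ℓ)).erase i := notMem_erase _ _
  have hjW : j ∉ (Finset.Icc 1 (t + 2 * ℓ)).erase i := by
    intro h
    have := mem_Icc.1 (mem_of_mem_erase h)
    omega
  have cardM : ∀ S : Finset ℕ, (S ∩ Finset.Icc 1 (t + 2 * ℓ)).card =
      (S ∩ (Finset.Icc 1 (t + 2 * ℓ)).erase i).card + (if i ∈ S then 1 else 0) := by
    intro S
    conv_lhs => rw [← insert_erase hiM]
    exact card_inter_insert hiW S
  have cardM' : ∀ S : Finset ℕ, (S ∩ insert j ((Finset.Icc 1 (t + 2 * ℓ)).erase i)).card =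
      (S ∩ (Finset.Icc 1 (t + 2 * ℓ)).erase i).card + (if j ∈ S then 1 else 0) :=
    card_inter_insert hjW
  apply Finset.Subset.antisymm
  · intro A hA
    have h1 := cardM A
    have h2 := cardM' A
    by_cases hAF : A ∈ franklFam n t ℓ
    · rw [mem_frankl] at hAF
      obtain ⟨hAN, hAc⟩ := hAF
      rw [mem_swapFam]
      refine ⟨hAN, ?_⟩
      by_cases hiA : i ∈ A
      · by_cases hjA : j ∈ A
        · simp only [hiA, hjA, if_pos] at h1 h2; omega
        · have hne : (A ∩ Finset.Icc 1 (t + 2 * ℓ)).card ≠ t + ℓ :=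
            fun h => hnocrit A hiA hjA h hA
          simp only [hiA, if_pos, hjA, if_neg, not_false_iff] at h1 h2; omega
      · by_cases hjA : j ∈ A <;>
          simp only [hiA, hjA, if_pos, if_neg, not_false_iff] at h1 h2 <;> omega
    · obtain ⟨_, _, hjA, hiA, hAN, hAc⟩ := structNot hi hij hjn hsh hA hAF
      rw [mem_swapFam]
      refine ⟨hAN, ?_⟩
      simp only [hiA, hjA, if_pos, if_neg, not_false_iff] at h1 h2
      omega
  · intro F' hF'
    rw [mem_swapFam] at hF'
    obtain ⟨hF'N, hF'c⟩ := hF'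
    have h1 := cardM F'
    have h2 := cardM' F'
    by_cases hFF : F' ∈ franklFam n t ℓ
    · refine fact1' hijne hsh hFF ?_
      intro hiF' hjF'
      rw [mem_frankl]
      constructor
      · intro a ha
        rcases mem_insert.1 ha with h | h
        · exact mem_Icc.2 ⟨h ▸ (by omega), h ▸ hjn⟩
        · exact hF'N (mem_of_mem_erase h)
      · have e1 : insert j (F'.erase i) ∩ (Finset.Icc 1 (t + 2 * ℓ)).erase i
            = F' ∩ (Finset.Icc 1 (t + 2 * ℓ)).erase i := by
          rw [insert_inter_of_notMem hjW, erase_inter,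
            erase_eq_of_notMem (fun h => hiW (mem_inter.1 h).2)]
        have hiG : i ∉ insert j (F'.erase i) := by
          intro h
          rcases mem_insert.1 h with h | h
          · exact hijne h
          · exact notMem_erase _ _ h
        have h3 := cardM (insert j (F'.erase i))
        rw [e1] at h3
        simp only [hiG, if_neg, not_false_iff, hjF'] at h3 h2
        simp only [hiF', if_pos] at h1
        omega
    · have hFN2 : ¬ (t + ℓ ≤ (F' ∩ Finset.Icc 1 (t + 2 * ℓ)).card) :=
        fun h => hFF (mem_frankl.2 ⟨hF'N, h⟩)
      by_cases hjF : j ∈ F'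
      swap
      · exfalso
        by_cases hiF : i ∈ F' <;> simp only [hiF, hjF, if_pos, if_neg, not_false_iff] at h1 h2 <;>
          omega
      by_cases hiF : i ∈ F'
      · exfalso
        simp only [hiF, hjF, if_pos] at h1 h2
        omega
      simp only [hiF, hjF, if_pos, if_neg, not_false_iff] at h1 h2
      have hjF2 : j ∉ insert i (F'.erase j) := by
        intro h
        rcases mem_insert.1 h with h | h
        · exact hijne h.symm
        · exact notMem_erase _ _ h
      have hiF2 : i ∈ insert i (F'.erase j) := mem_insert_self _ _
      have e1 : insert i (F'.erase j) ∩ (Finset.Icc 1 (t + 2 * ℓ)).erase i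
          = F' ∩ (Finset.Icc 1 (t + 2 * ℓ)).erase i := by
        rw [insert_inter_of_notMem hiW, erase_inter,
          erase_eq_of_notMem (fun h => hjW (mem_inter.1 h).2)]
      have hFM : (insert i (F'.erase j) ∩ Finset.Icc 1 (t + 2 * ℓ)).card = t + ℓ := by
        rw [cardM _, e1]
        simp only [hiF2, if_pos]
        omega
      have hFnA : insert i (F'.erase j) ∉ 𝓖 := hnocrit _ hiF2 hjF2 hFM
      have hFfr : insert i (F'.erase j) ∈ franklFam n t ℓ := by
        refine mem_frankl.2 ⟨?_, by rw [hFM]⟩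
        intro a ha
        rcases mem_insert.1 ha with h | h
        · exact mem_Icc.2 ⟨h ▸ hi, h ▸ (by omega)⟩
        · exact hF'N (mem_of_mem_erase h)
      rcases fact1 hijne hsh hFfr with h | ⟨_, _, _, hmem⟩
      · exact absurd h hFnA
      · have e2 : insert j ((insert i (F'.erase j)).erase i) = F' := by
          rw [erase_insert (fun h => hiF (mem_of_mem_erase h)), insert_erase hjF]
        rwa [e2] at hmem

lemma mainB {n t ℓ i j : ℕ} {𝓐 𝓑 : Finset (Finset ℕ)}
    (ht : 2 ≤ t) (hi : 1 ≤ i) (hij : i < j) (hjn : j ≤ n)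
    (hcross : ∀ A ∈ 𝓐, ∀ B ∈ 𝓑, t ≤ (A ∩ B).card)
    (hshA : shiftFam i j 𝓐 = franklFam n t ℓ)
    (hshB : shiftFam i j 𝓑 = franklFam n t ℓ)
    (hex : ∃ A ∈ 𝓐, A ∉ franklFam n t ℓ) :
    i ≤ t + 2 * ℓ ∧ t + 2 * ℓ < j ∧ 𝓐 = swapFam n t ℓ i j ∧ 𝓑 = swapFam n t ℓ i j := by
  obtain ⟨A₀, hA₀, hA₀F⟩ := hex
  obtain ⟨him, hjm, hjA₀, hiA₀, hA₀N, hA₀c⟩ := structNot hi hij hjn hshA hA₀ hA₀F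
  have hiM : i ∈ Finset.Icc 1 (t + 2 * ℓ) := mem_Icc.2 ⟨hi, him⟩
  have hiW : i ∉ (Finset.Icc 1 (t + 2 * ℓ)).erase i := notMem_erase _ _
  have hjW : j ∉ (Finset.Icc 1 (t + 2 * ℓ)).erase i := by
    intro h
    have := mem_Icc.1 (mem_of_mem_erase h)
    omega
  have hWc : ((Finset.Icc 1 (t + 2 * ℓ)).erase i).card + 1 = t + 2 * ℓ := by
    rw [card_erase_of_mem hiM, Nat.card_Icc]
    omega
  have hcross' : ∀ B ∈ 𝓑, ∀ A ∈ 𝓐, t ≤ (B ∩ A).card := by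
    intro B hB A hA
    rw [inter_comm]
    exact hcross A hA B hB
  have hjins : ∀ X Y : Finset ℕ, Y ⊆ (Finset.Icc 1 (t + 2 * ℓ)).erase i →
      insert j X ∩ Y = X ∩ Y := fun X Y hYW =>
    insert_inter_of_notMem (fun h => hjW (hYW h))
  have hiIns : ∀ X : Finset ℕ, X ⊆ (Finset.Icc 1 (t + 2 * ℓ)).erase i →
      i ∉ insert j X := by
    intro X hX h
    rcases mem_insert.1 h with h | h
    · exact Nat.ne_of_lt hij h
    · exact hiW (hX h)
  -- a single ping-pong step
  have step2A : ∀ X X' : Finset ℕ, X ⊆ (Finset.Icc 1 (t + 2 * ℓ)).erase i →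
      X' ⊆ (Finset.Icc 1 (t + 2 * ℓ)).erase i → X.card + 1 = t + ℓ →
      X'.card + 1 = t + ℓ → (X \ X').card ≤ 1 → insert j X ∈ 𝓐 → insert j X' ∈ 𝓐 := by
    intro X X' hXW hX'W hXc hX'c hd hmem
    obtain ⟨Z, hZW, hZc, hXZ, hX'Z⟩ := mid ht hWc hXW hX'W hXc hX'c hd
    have h1 : insert j Z ∈ 𝓑 :=
      keyStep hi hij hjn him hjm hcross hshB hmem (hiIns X hXW) hZW hZc
        (by rw [hjins X Z hZW]; exact hXZ)
    exact keyStep hi hij hjn him hjm hcross' hshA h1 (hiIns Z hZW) hX'W hX'c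
      (by rw [hjins Z X' hX'W, inter_comm]; exact hX'Z)
  -- reachability by repeated single-element exchanges
  have reach : ∀ c : ℕ, ∀ X X' : Finset ℕ, X ⊆ (Finset.Icc 1 (t + 2 * ℓ)).erase i →
      X' ⊆ (Finset.Icc 1 (t + 2 * ℓ)).erase i → X.card + 1 = t + ℓ →
      X'.card + 1 = t + ℓ → (X' \ X).card ≤ c → insert j X ∈ 𝓐 → insert j X' ∈ 𝓐 := by
    intro c
    induction c with
    | zero =>
      intro X X' hXW hX'W hXc hX'c hd hmem
      have hsub : X' ⊆ X := sdiff_eq_empty_iff_subset.1 (card_eq_zero.1 (Nat.le_zero.1 hd))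
      have : X' = X := eq_of_subset_of_card_le hsub (by omega)
      rwa [this]
    | succ c ih =>
      intro X X' hXW hX'W hXc hX'c hd hmem
      by_cases h0 : (X' \ X).card = 0
      · have hsub : X' ⊆ X := sdiff_eq_empty_iff_subset.1 (card_eq_zero.1 h0)
        have : X' = X := eq_of_subset_of_card_le hsub (by omega)
        rwa [this]
      · obtain ⟨y, hy⟩ := card_pos.1 (Nat.pos_of_ne_zero h0)
        have e1 := card_inter_add_card_sdiff X X'
        have e2 := card_inter_add_card_sdiff X' X
        have e3 : (X ∩ X').card = (X' ∩ X).card := by rw [inter_comm]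
        have hxpos : 0 < (X \ X').card := by omega
        obtain ⟨x, hx⟩ := card_pos.1 hxpos
        have hyX' : y ∈ X' := (mem_sdiff.1 hy).1
        have hyX : y ∉ X := (mem_sdiff.1 hy).2
        have hxX : x ∈ X := (mem_sdiff.1 hx).1
        have hxX' : x ∉ X' := (mem_sdiff.1 hx).2
        have hyE : y ∉ X.erase x := fun h => hyX (mem_of_mem_erase h)
        have hX₁W : insert y (X.erase x) ⊆ (Finset.Icc 1 (t + 2 * ℓ)).erase i :=
          insert_subset (hX'W hyX') ((erase_subset _ _).trans hXW)
        have hX₁c : (insert y (X.erase x)).card + 1 = t + ℓ := by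
          rw [card_insert_of_notMem hyE, card_erase_of_mem hxX]
          omega
        have hd1 : (X \ insert y (X.erase x)).card ≤ 1 := by
          have hsub : X \ insert y (X.erase x) ⊆ {x} := by
            intro a ha
            obtain ⟨haX, haN⟩ := mem_sdiff.1 ha
            rw [mem_singleton]
            by_contra hax
            exact haN (mem_insert_of_mem (mem_erase.2 ⟨hax, haX⟩))
          calc (X \ insert y (X.erase x)).card ≤ ({x} : Finset ℕ).card := card_le_card hsub
            _ = 1 := card_singleton x
        have hmem1 : insert j (insert y (X.erase x)) ∈ 𝓐 :=
          step2A X _ hXW hX₁W hXc hX₁c hd1 hmem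
        have hd2 : (X' \ insert y (X.erase x)).card ≤ c := by
          have e4 : X' \ insert y (X.erase x) = (X' \ X).erase y := by
            ext a
            simp only [mem_sdiff, mem_erase, mem_insert]
            constructor
            · rintro ⟨haX', haN⟩
              push_neg at haN
              obtain ⟨hay, haN2⟩ := haN
              refine ⟨hay, haX', fun haX => ?_⟩
              by_cases hax : a = x
              · exact hxX' (hax ▸ haX')
              · exact haN2 hax haX
            · rintro ⟨hay, haX', haX⟩
              refine ⟨haX', fun h => ?_⟩
              rcases h with h | ⟨_, h⟩
              · exact hay h
              · exact haX h
          rw [e4, card_erase_of_mem (mem_sdiff.2 ⟨hyX', hyX⟩)]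
          omega
        exact ih _ X' hX₁W hX'W hX₁c hX'c hd2 hmem1
  -- the seed: a canonical set in 𝓐
  have seed : ∃ X₀, X₀ ⊆ (Finset.Icc 1 (t + 2 * ℓ)).erase i ∧ X₀.card + 1 = t + ℓ ∧
      insert j X₀ ∈ 𝓐 := by
    have hXW : A₀ ∩ Finset.Icc 1 (t + 2 * ℓ) ⊆ (Finset.Icc 1 (t + 2 * ℓ)).erase i := by
      intro a ha
      exact mem_erase.2 ⟨fun h => hiA₀ (h ▸ (mem_inter.1 ha).1), (mem_inter.1 ha).2⟩
    obtain ⟨Z, hZW, hZc, hXZ, _⟩ := mid ht hWc hXW hXW hA₀c hA₀c (by simp)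
    have hAZ : (A₀ ∩ Z).card + 1 ≤ t := by
      have hZM : Finset.Icc 1 (t + 2 * ℓ) ∩ Z = Z :=
        inter_eq_right.2 (hZW.trans (erase_subset _ _))
      have e : A₀ ∩ Finset.Icc 1 (t + 2 * ℓ) ∩ Z = A₀ ∩ Z := by
        rw [inter_assoc, hZM]
      rw [← e]
      exact hXZ
    have h1 : insert j Z ∈ 𝓑 := keyStep hi hij hjn him hjm hcross hshB hA₀ hiA₀ hZW hZc hAZ
    obtain ⟨Z₂, hZ₂W, hZ₂c, hZZ₂, _⟩ := mid ht hWc hZW hZW hZc hZc (by simp)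
    have h2 : insert j Z₂ ∈ 𝓐 :=
      keyStep hi hij hjn him hjm hcross' hshA h1 (hiIns Z hZW) hZ₂W hZ₂c
        (by rw [hjins Z Z₂ hZ₂W]; exact hZZ₂)
    exact ⟨Z₂, hZ₂W, hZ₂c, h2⟩
  have allA : ∀ Y, Y ⊆ (Finset.Icc 1 (t + 2 * ℓ)).erase i → Y.card + 1 = t + ℓ →
      insert j Y ∈ 𝓐 := by
    obtain ⟨X₀, h1, h2, h3⟩ := seed
    intro Y hYW hYc
    exact reach (Y \ X₀).card X₀ Y h1 hYW h2 hYc le_rfl h3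
  have allB : ∀ Y, Y ⊆ (Finset.Icc 1 (t + 2 * ℓ)).erase i → Y.card + 1 = t + ℓ →
      insert j Y ∈ 𝓑 := by
    intro Y hYW hYc
    obtain ⟨Z, hZW, hZc, hYZ, _⟩ := mid ht hWc hYW hYW hYc hYc (by simp)
    exact keyStep hi hij hjn him hjm hcross hshB (allA Z hZW hZc) (hiIns Z hZW) hYW hYc
      (by rw [hjins Z Y hYW, inter_comm]; exact hYZ)
  -- no critical set belongs to either family
  have nocrit : ∀ (𝓖 𝓗 : Finset (Finset ℕ)),
      (∀ G ∈ 𝓖, ∀ H ∈ 𝓗, t ≤ (G ∩ H).card) →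
      (∀ Y, Y ⊆ (Finset.Icc 1 (t + 2 * ℓ)).erase i → Y.card + 1 = t + ℓ →
        insert j Y ∈ 𝓗) →
      ∀ F : Finset ℕ, i ∈ F → j ∉ F →
        (F ∩ Finset.Icc 1 (t + 2 * ℓ)).card = t + ℓ → F ∉ 𝓖 := by
    intro 𝓖 𝓗 hcr hall F hiF hjF hFc hFA
    have hiFM : i ∈ F ∩ Finset.Icc 1 (t + 2 * ℓ) := mem_inter.2 ⟨hiF, hiM⟩
    have hXW : (F ∩ Finset.Icc 1 (t + 2 * ℓ)).erase i ⊆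
        (Finset.Icc 1 (t + 2 * ℓ)).erase i := by
      intro a ha
      exact mem_erase.2 ⟨(mem_erase.1 ha).1, (mem_inter.1 (mem_of_mem_erase ha)).2⟩
    have hXc : ((F ∩ Finset.Icc 1 (t + 2 * ℓ)).erase i).card + 1 = t + ℓ := by
      rw [card_erase_of_mem hiFM]
      omega
    obtain ⟨Z, hZW, hZc, hXZ, _⟩ := mid ht hWc hXW hXW hXc hXc (by simp)
    have hB : insert j Z ∈ 𝓗 := hall Z hZW hZc
    have hc := hcr F hFA _ hB
    have e1 : F ∩ insert j Z = (F ∩ Finset.Icc 1 (t + 2 * ℓ)).erase i ∩ Z := by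
      rw [inter_comm, insert_inter_of_notMem hjF, inter_comm]
      ext a
      simp only [mem_inter, mem_erase]
      constructor
      · rintro ⟨haF, haZ⟩
        have haW := mem_erase.1 (hZW haZ)
        exact ⟨⟨haW.1, haF, haW.2⟩, haZ⟩
      · rintro ⟨⟨_, haF, _⟩, haZ⟩
        exact ⟨haF, haZ⟩
    rw [e1] at hc
    omega
  refine ⟨him, hjm, ?_, ?_⟩
  · exact famEq ht hi hij hjn him hjm hshA (nocrit 𝓐 𝓑 hcross allB)
  · exact famEq ht hi hij hjn him hjm hshB (nocrit 𝓑 𝓐 hcross' allA)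

lemma swapFam_iso {n t ℓ i j : ℕ} (hi : 1 ≤ i) (hij : i < j) (hjn : j ≤ n)
    (him : i ≤ t + 2 * ℓ) (hjm : t + 2 * ℓ < j) :
    FamIso n (swapFam n t ℓ i j) (franklFam n t ℓ) := by
  refine ⟨Equiv.swap i j, ?_, ?_⟩
  · intro x hx
    obtain ⟨hx1, hx2⟩ := mem_Icc.1 hx
    by_cases hxi : x = i
    · rw [hxi, Equiv.swap_apply_left]
      exact mem_Icc.2 ⟨by omega, hjn⟩
    by_cases hxj : x = j
    · rw [hxj, Equiv.swap_apply_right]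
      exact mem_Icc.2 ⟨hi, by omega⟩
    · rw [Equiv.swap_apply_of_ne_of_ne hxi hxj]
      exact hx
  · have hσN : ∀ x, x ∈ Finset.Icc 1 n → Equiv.swap i j x ∈ Finset.Icc 1 n := by
      intro x hx
      obtain ⟨hx1, hx2⟩ := mem_Icc.1 hx
      by_cases hxi : x = i
      · rw [hxi, Equiv.swap_apply_left]; exact mem_Icc.2 ⟨by omega, hjn⟩
      by_cases hxj : x = j
      · rw [hxj, Equiv.swap_apply_right]; exact mem_Icc.2 ⟨hi, by omega⟩
      · rw [Equiv.swap_apply_of_ne_of_ne hxi hxj]; exact hx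
    have hinj : Function.Injective (Equiv.swap i j) := Equiv.injective _
    ext F'
    simp only [mem_image]
    constructor
    · intro hF'
      rw [mem_swapFam] at hF'
      obtain ⟨hF'N, hF'c⟩ := hF'
      refine ⟨F'.image (Equiv.swap i j), ?_, ?_⟩
      · rw [mem_frankl]
        constructor
        · intro a ha
          obtain ⟨b, hb, rfl⟩ := mem_image.1 ha
          exact hσN b (hF'N hb)
        · have hsub : (F' ∩ insert j ((Finset.Icc 1 (t + 2 * ℓ)).erase i)).image (Equiv.swap i j)
              ⊆ F'.image (Equiv.swap i j) ∩ Finset.Icc 1 (t + 2 * ℓ) := by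
            intro a ha
            obtain ⟨b, hb, rfl⟩ := mem_image.1 ha
            obtain ⟨hbF, hbM'⟩ := mem_inter.1 hb
            refine mem_inter.2 ⟨mem_image_of_mem _ hbF, ?_⟩
            rcases mem_insert.1 hbM' with h | h
            · rw [h, Equiv.swap_apply_right]; exact mem_Icc.2 ⟨hi, him⟩
            · obtain ⟨hbi, hbM⟩ := mem_erase.1 h
              have hbj : b ≠ j := by
                have := mem_Icc.1 hbM; omega
              rw [Equiv.swap_apply_of_ne_of_ne hbi hbj]
              exact hbM
          have := card_le_card hsub
          rw [Finset.card_image_of_injective _ hinj] at this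
          omega
      · rw [Finset.image_image]
        ext a
        simp [Equiv.swap_apply_self]
    · rintro ⟨B, hB, rfl⟩
      rw [mem_frankl] at hB
      obtain ⟨hBN, hBc⟩ := hB
      rw [mem_swapFam]
      constructor
      · intro a ha
        obtain ⟨b, hb, rfl⟩ := mem_image.1 ha
        exact hσN b (hBN hb)
      · have hsub : (B ∩ Finset.Icc 1 (t + 2 * ℓ)).image (Equiv.swap i j)
            ⊆ B.image (Equiv.swap i j) ∩ insert j ((Finset.Icc 1 (t + 2 * ℓ)).erase i) := by
          intro a ha
          obtain ⟨b, hb, rfl⟩ := mem_image.1 ha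
          obtain ⟨hbB, hbM⟩ := mem_inter.1 hb
          refine mem_inter.2 ⟨mem_image_of_mem _ hbB, ?_⟩
          by_cases hbi : b = i
          · rw [hbi, Equiv.swap_apply_left]
            exact mem_insert_self _ _
          · have hbj : b ≠ j := by
              have := mem_Icc.1 hbM; omega
            rw [Equiv.swap_apply_of_ne_of_ne hbi hbj]
            exact mem_insert_of_mem (mem_erase.2 ⟨hbi, hbM⟩)
        have := card_le_card hsub
        rw [Finset.card_image_of_injective _ hinj] at this
        omega

/-- If two cross `t`-intersecting families both shift to `𝓕_ℓ^t(n)`, then they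
are equal and isomorphic to `𝓕_ℓ^t(n)`. -/
theorem stmt14 (n k t ℓ i j : ℕ) (hn : 3 ≤ n) (ht : 2 ≤ t) (htk : t ≤ k)
    (hℓ : ℓ ≤ k - t) (hi : 1 ≤ i) (hij : i < j) (hj : j ≤ n)
    (𝓐 𝓑 : Finset (Finset ℕ))
    (h𝓐 : ∀ A ∈ 𝓐, A ⊆ Finset.Icc 1 n) (h𝓑 : ∀ B ∈ 𝓑, B ⊆ Finset.Icc 1 n)
    (hcross : ∀ A ∈ 𝓐, ∀ B ∈ 𝓑, t ≤ (A ∩ B).card)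
    (hA : shiftFam i j 𝓐 = franklFam n t ℓ)
    (hB : shiftFam i j 𝓑 = franklFam n t ℓ) :
    𝓐 = 𝓑 ∧ FamIso n 𝓐 (franklFam n t ℓ) := by
  have hijne : i ≠ j := Nat.ne_of_lt hij
  by_cases hexA : ∃ A ∈ 𝓐, A ∉ franklFam n t ℓ
  · obtain ⟨him, hjm, hAe, hBe⟩ := mainB ht hi hij hj hcross hA hB hexA
    refine ⟨hAe.trans hBe.symm, ?_⟩
    rw [hAe]
    exact swapFam_iso hi hij hj him hjm
  by_cases hexB : ∃ B ∈ 𝓑, B ∉ franklFam n t ℓ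
  · have hcross' : ∀ B ∈ 𝓑, ∀ A ∈ 𝓐, t ≤ (B ∩ A).card := by
      intro B hB' A hA'
      rw [inter_comm]
      exact hcross A hA' B hB'
    obtain ⟨him, hjm, hBe, hAe⟩ := mainB ht hi hij hj hcross' hB hA hexB
    refine ⟨hAe.trans hBe.symm, ?_⟩
    rw [hAe]
    exact swapFam_iso hi hij hj him hjm
  · push_neg at hexA hexB
    have hAe := famEqF hijne hA hexA
    have hBe := famEqF hijne hB hexB
    refine ⟨hAe.trans hBe.symm, ?_⟩
    rw [hAe]
    exact ⟨Equiv.refl ℕ, fun x hx => hx, by simp⟩
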